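/- Let d ≥ 1 and let σ ∈ Sym(2d) be the permutation given in one-line notation by (2d−1, 2d−3, …, 1, 2d, 2d−2, …, 2); that is, σ(i) = 2d+1−2i for 1 ≤ i ≤ d and σ(d+j) = 2d+2−2j for 1 ≤ j ≤ d. Suppose {1, 2, …, 2d} is partitioned into d consecutive (possibly empty) integer intervals I_1, …, I_d such that each image σ(I_k) is a set of consecutive integers (and then the σ(I_k) are pairwise disjoint intervals). Then all but at most one of the intervals I_k are empty. -/

import Mathlib

/-- Let σ ∈ Sym(2d) be (2d-1, 2d-3, …, 1, 2d, 2d-2, …, 2) in one-line notation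
(here written 0-indexed: σ(i) = 2d-2-2i for i < d and σ(i) = 4d-1-2i for i ≥ d).
If {0, …, 2d-1} is partitioned into d consecutive (possibly empty) integer intervals
I_1, …, I_d, given by cut points b, such that each image σ(I_k) is an integer interval,
then all but at most one of the intervals are empty. -/
theorem evenOddInterleave_blocks_trivial
    (d : ℕ) (hd : 1 ≤ d) (σ : Equiv.Perm (Fin (2 * d)))
    (hσ : ∀ i : Fin (2 * d),
      (σ i : ℕ) = if (i : ℕ) < d then 2 * d - 2 * (i : ℕ) - 2 else 4 * d - 2 * (i : ℕ) - 1)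
    (b : Fin (d + 1) → ℕ) (hb0 : b 0 = 0) (hbd : b (Fin.last d) = 2 * d)
    (hmono : Monotone b)
    (hconsec : ∀ k : Fin d, ∀ u v w : Fin (2 * d),
      u ∈ ⇑σ '' {i : Fin (2 * d) | b k.castSucc ≤ (i : ℕ) ∧ (i : ℕ) < b k.succ} →
      w ∈ ⇑σ '' {i : Fin (2 * d) | b k.castSucc ≤ (i : ℕ) ∧ (i : ℕ) < b k.succ} →
      u ≤ v → v ≤ w →
      v ∈ ⇑σ '' {i : Fin (2 * d) | b k.castSucc ≤ (i : ℕ) ∧ (i : ℕ) < b k.succ}) :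
    ∃ k₀ : Fin d, ∀ k : Fin d, k ≠ k₀ → b k.castSucc = b k.succ := by
  have hble : ∀ j, b j ≤ 2 * d := fun j => hbd ▸ hmono (Fin.le_last j)
  by_cases hex : ∃ k : Fin d, b k.castSucc + 2 ≤ b k.succ
  · obtain ⟨k, hk⟩ := hex
    have hr2 : b k.succ ≤ 2 * d := hble _
    have memS : ∀ (n : ℕ) (h : n < 2 * d), b k.castSucc ≤ n → n < b k.succ →
        σ ⟨n, h⟩ ∈ ⇑σ '' {i : Fin (2 * d) | b k.castSucc ≤ (i : ℕ) ∧ (i : ℕ) < b k.succ} :=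
      fun n h h1 h2 => ⟨⟨n, h⟩, ⟨h1, h2⟩, rfl⟩
    have hfull : b k.castSucc = 0 ∧ b k.succ = 2 * d := by
      rcases le_or_gt (b k.succ) d with hA | hA
      · -- block inside first half : contradiction
        exfalso
        have h1 : (b k.castSucc : ℕ) + 1 < 2 * d := by omega
        have h0 : (b k.castSucc : ℕ) < 2 * d := by omega
        have hv : 2 * d - 2 * b k.castSucc - 3 < 2 * d := by omega
        have hu := memS (b k.castSucc + 1) h1 (by omega) (by omega)
        have hw := memS (b k.castSucc) h0 (le_refl _) (by omega)
        have hle1 : σ ⟨b k.castSucc + 1, h1⟩ ≤ (⟨2 * d - 2 * b k.castSucc - 3, hv⟩ : Fin (2 * d)) := by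
          rw [Fin.le_def, hσ]; simp only [if_pos (by omega : b k.castSucc + 1 < d)]; omega
        have hle2 : (⟨2 * d - 2 * b k.castSucc - 3, hv⟩ : Fin (2 * d)) ≤ σ ⟨b k.castSucc, h0⟩ := by
          rw [Fin.le_def, hσ]; simp only [if_pos (by omega : b k.castSucc < d)]; omega
        obtain ⟨j, ⟨hj1, hj2⟩, hji⟩ := hconsec k _ _ _ hu hw hle1 hle2
        have hval := congrArg Fin.val hji
        rw [hσ j] at hval
        rw [if_pos (by omega : (j : ℕ) < d)] at hval
        simp only at hval
        omega
      rcases le_or_gt d (b k.castSucc) with hB | hB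
      · -- block inside second half : contradiction
        exfalso
        have h1 : (b k.castSucc : ℕ) + 1 < 2 * d := by omega
        have h0 : (b k.castSucc : ℕ) < 2 * d := by omega
        have hv : 4 * d - 2 * b k.castSucc - 2 < 2 * d := by omega
        have hu := memS (b k.castSucc + 1) h1 (by omega) (by omega)
        have hw := memS (b k.castSucc) h0 (le_refl _) (by omega)
        have hle1 : σ ⟨b k.castSucc + 1, h1⟩ ≤ (⟨4 * d - 2 * b k.castSucc - 2, hv⟩ : Fin (2 * d)) := by
          rw [Fin.le_def, hσ]; simp only [if_neg (by omega : ¬ b k.castSucc + 1 < d)]; omega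
        have hle2 : (⟨4 * d - 2 * b k.castSucc - 2, hv⟩ : Fin (2 * d)) ≤ σ ⟨b k.castSucc, h0⟩ := by
          rw [Fin.le_def, hσ]; simp only [if_neg (by omega : ¬ b k.castSucc < d)]; omega
        obtain ⟨j, ⟨hj1, hj2⟩, hji⟩ := hconsec k _ _ _ hu hw hle1 hle2
        have hval := congrArg Fin.val hji
        rw [hσ j] at hval
        rw [if_neg (by omega : ¬ (j : ℕ) < d)] at hval
        simp only at hval
        omega
      · -- block straddles : must be everything
        have hd1 : d - 1 < 2 * d := by omega
        have hdd : d < 2 * d := by omega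
        have hu := memS (d - 1) hd1 (by omega) (by omega)
        have hw := memS d hdd (by omega) (by omega)
        have hall : ∀ i : Fin (2 * d), b k.castSucc ≤ (i : ℕ) ∧ (i : ℕ) < b k.succ := by
          intro i
          have hle1 : σ ⟨d - 1, hd1⟩ ≤ σ i := by
            rw [Fin.le_def, hσ]; rw [if_pos (by omega : d - 1 < d)]
            simp only; omega
          have hle2 : σ i ≤ σ ⟨d, hdd⟩ := by
            rw [Fin.le_def, hσ ⟨d, hdd⟩]; rw [if_neg (by omega : ¬ d < d)]
            simp only
            have := (σ i).isLt
            omega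
          obtain ⟨j, hj, hji⟩ := hconsec k _ _ _ hu hw hle1 hle2
          have : j = i := σ.injective hji
          rwa [this] at hj
        have ha := hall ⟨0, by omega⟩
        have hb' := hall ⟨2 * d - 1, by omega⟩
        simp only at ha hb'
        omega
    refine ⟨k, fun k' hk' => ?_⟩
    rcases lt_or_gt_of_ne hk' with hlt | hgt
    · have h1 : b k'.succ ≤ b k.castSucc := hmono (by
        rw [Fin.le_def, Fin.val_succ, Fin.coe_castSucc]
        exact Fin.lt_def.mp hlt)
      have h2 : b k'.castSucc ≤ b k'.succ := hmono (Fin.castSucc_lt_succ).le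
      omega
    · have h1 : b k.succ ≤ b k'.castSucc := hmono (by
        rw [Fin.le_def, Fin.val_succ, Fin.coe_castSucc]
        exact Fin.lt_def.mp hgt)
      have h2 : b k'.castSucc ≤ b k'.succ := hmono (Fin.castSucc_lt_succ).le
      have h3 := hble k'.succ
      omega
  · exfalso
    push_neg at hex
    have hstep : ∀ i (h : i < d + 1), b ⟨i, h⟩ ≤ i := by
      intro i
      induction i with
      | zero => intro h; simpa using hb0.le
      | succ n ih =>
        intro h
        have hk := hex ⟨n, by omega⟩
        have e1 : (⟨n, by omega⟩ : Fin d).castSucc = ⟨n, by omega⟩ := rfl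
        have e2 : (⟨n, by omega⟩ : Fin d).succ = ⟨n + 1, h⟩ := rfl
        rw [e1, e2] at hk
        have := ih (by omega)
        omega
    have := hstep d (by omega)
    have : b (Fin.last d) ≤ d := this
    omega
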